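/- For n odd and m odd, the tuple (0,0,...,0,1) in (Z/mZ)^n lies in the image of D^k for every k ≥ 0; equivalently, the basic Ducci sequence has length 0 (i.e., (0,...,0,1) lies in a Ducci cycle). -/

import Mathlib

/-- The Ducci map on `(ZMod m)^n`. -/
def ducci (m n : ℕ) [NeZero n] (v : Fin n → ZMod m) : Fin n → ZMod m :=
  fun i => v i + v (i + 1)

/-- The basic tuple `(0,0,...,0,1)`. -/
def basicTuple (m n : ℕ) : Fin n → ZMod m :=
  fun i => if i.val = n - 1 then 1 else 0

open Fin.NatCast in
lemma ducci_ker_zero (m n : ℕ) [NeZero n] (hn : Odd n) (hm : Odd m)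
    (u : Fin n → ZMod m) (h : ∀ i : Fin n, u i + u (i + 1) = 0) : ∀ i, u i = 0 := by
  have key : ∀ k : ℕ, u (k : Fin n) = (-1 : ZMod m) ^ k * u 0 := by
    intro k
    induction k with
    | zero => simp
    | succ k ih =>
      have hk := h (k : Fin n)
      have : u ((k : Fin n) + 1) = - u (k : Fin n) := by linear_combination hk
      push_cast
      rw [this, ih]
      ring
  have hn0 : u 0 = 0 := by
    have := key n
    rw [Fin.natCast_self, hn.neg_one_pow] at this
    have h2 : (2 : ZMod m) * u 0 = 0 := by linear_combination this
    have hu : IsUnit (2 : ZMod m) := by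
      rw [show (2 : ZMod m) = ((2 : ℕ) : ZMod m) by push_cast; ring, ZMod.isUnit_iff_coprime]
      simpa using hm.coprime_two_left
    exact (hu.mul_right_eq_zero).mp h2
  intro i
  have := key i.val
  rw [Fin.cast_val_eq_self, hn0, mul_zero] at this
  exact this

lemma ducci_bijective (m n : ℕ) [NeZero n] (hn : Odd n) (hm : Odd m) :
    Function.Bijective (ducci m n) := by
  have : NeZero m := ⟨hm.pos.ne'⟩
  rw [Finite.injective_iff_bijective.symm]
  intro v w hvw
  have h : ∀ i : Fin n, (v - w) i + (v - w) (i + 1) = 0 := by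
    intro i
    have : ducci m n v i = ducci m n w i := by rw [hvw]
    simp only [ducci] at this
    simp only [Pi.sub_apply]
    linear_combination this
  have := ducci_ker_zero m n hn hm (v - w) h
  funext i
  have hi := this i
  simp only [Pi.sub_apply, sub_eq_zero] at hi
  exact hi

theorem basic_tuple_periodic_of_odd (m n : ℕ) [NeZero n] (hn : Odd n) (hm : Odd m) :
    ∃ t > 0, (ducci m n)^[t] (basicTuple m n) = basicTuple m n := by
  have : NeZero m := ⟨hm.pos.ne'⟩
  set e : Equiv.Perm (Fin n → ZMod m) := Equiv.ofBijective _ (ducci_bijective m n hn hm)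
  have hiter : ∀ t : ℕ, (ducci m n)^[t] = ⇑(e ^ t) := by
    intro t
    induction t with
    | zero => simp
    | succ t ih =>
      rw [Function.iterate_succ', pow_succ']
      funext x
      simp [ih, e, Equiv.Perm.mul_apply, Equiv.ofBijective_apply]
  refine ⟨orderOf e, orderOf_pos e, ?_⟩
  rw [hiter, pow_orderOf_eq_one]
  simp
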